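/- arXiv:1703.03461 — 4 statements merged into one kernel-verified Lean document; each statement's English description precedes it below -/
import Mathlib

section
/- For any n-dimensional weight r and any x ∈ ℝ^n and any real N > 1, there exists an integer vector (p_1,...,p_n,q) ∈ ℤ^{n+1} with 0 < |q| ≤ N and |q·x_i + p_i| ≤ N^{-r_i} for all i = 1,...,n. -/
open MeasureTheory Set

noncomputable def shear {ι : Type*} (x : ι → ℝ) : (Option ι → ℝ) ≃ₗ[ℝ] (Option ι → ℝ) where
  toFun v := fun j => j.elim (v none) (fun i => v (some i) + x i * v none)
  invFun v := fun j => j.elim (v none) (fun i => v (some i) - x i * v none)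
  map_add' u v := by funext j; cases j <;> simp <;> ring
  map_smul' c v := by funext j; cases j <;> simp <;> ring
  left_inv v := by funext j; cases j <;> simp
  right_inv v := by funext j; cases j <;> simp

lemma det_shear {ι : Type*} [Fintype ι] [DecidableEq ι] (x : ι → ℝ) :
    LinearMap.det ((shear x) : (Option ι → ℝ) →ₗ[ℝ] (Option ι → ℝ)) = 1 := by
  rw [← LinearMap.det_toMatrix (Pi.basisFun ℝ (Option ι))]
  have hM : LinearMap.toMatrix (Pi.basisFun ℝ (Option ι)) (Pi.basisFun ℝ (Option ι))
      ((shear x) : (Option ι → ℝ) →ₗ[ℝ] (Option ι → ℝ))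
      = 1 + (Matrix.replicateCol Unit (fun j : Option ι => j.elim 0 x) : Matrix (Option ι) Unit ℝ) * (Matrix.replicateRow Unit (fun j : Option ι => j.elim 1 0) : Matrix Unit (Option ι) ℝ) := by
    ext j k
    simp only [LinearMap.toMatrix_apply, Pi.basisFun_repr, Pi.basisFun_apply,
      Matrix.add_apply, Matrix.mul_apply, Matrix.replicateCol_apply, Matrix.replicateRow_apply,
      Finset.sum_const, Finset.card_univ, Fintype.card_unit, one_smul]
    cases j <;> cases k <;>
      simp [shear, LinearEquiv.coe_mk, Pi.single_apply, Matrix.one_apply, Option.elim] <;> ring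
  rw [hM, Matrix.det_one_add_replicateCol_mul_replicateRow]
  simp [dotProduct, Fintype.sum_option]

lemma key {ι : Type*} [Fintype ι] [DecidableEq ι] (r : ι → ℝ) (hr : ∀ i, 0 < r i)
    (hsum : ∑ i, r i = 1) (x : ι → ℝ) (N : ℝ) (hN : 1 < N) :
    ∃ (p : ι → ℤ) (q : ℤ), q ≠ 0 ∧ (|q| : ℝ) ≤ N ∧
      ∀ i, |(q : ℝ) * x i + (p i : ℝ)| ≤ N ^ (-(r i)) := by
  have hN0 : (0:ℝ) < N := lt_trans one_pos hN
  set a : Option ι → ℝ := fun j => j.elim N (fun i => N ^ (-(r i))) with ha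
  have ha0 : ∀ j, 0 ≤ a j := by
    rintro (_|i)
    · exact hN0.le
    · exact (Real.rpow_pos_of_pos hN0 _).le
  set box : Set (Option ι → ℝ) := Set.pi univ fun j => Icc (-(a j)) (a j) with hbox
  set s : Set (Option ι → ℝ) := (shear x) ⁻¹' box with hs
  set b := Pi.basisFun ℝ (Option ι) with hb
  have fund := ZSpan.isAddFundamentalDomain' b volume
  have hF : volume (ZSpan.fundamentalDomain b) = 1 := by
    rw [ZSpan.volume_fundamentalDomain]
    have : Matrix.of ⇑b = 1 := by
      ext i j
      simp [hb, Matrix.one_apply, Pi.single_apply, eq_comm]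
    simp [this]
  -- volume of s
  have hboxvol : volume box = 2 ^ (Fintype.card ι + 1) := by
    rw [hbox, volume_pi_pi]
    have h2 : ∀ j, volume (Icc (-(a j)) (a j)) = ENNReal.ofReal (2 * a j) := by
      intro j; rw [Real.volume_Icc]; ring_nf
    simp_rw [h2]
    rw [Fintype.prod_option, ← ENNReal.ofReal_prod_of_nonneg
      (fun i _ => mul_nonneg (by norm_num) (ha0 _)), ← ENNReal.ofReal_mul (by positivity)]
    have : 2 * a none * ∏ i, 2 * a (some i) = 2 ^ (Fintype.card ι + 1) := by
      rw [Finset.prod_mul_distrib, Finset.prod_const, Finset.card_univ]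
      have : ∏ i, a (some i) = N ^ (-(1:ℝ)) := by
        simp only [ha, Option.elim_some]
        rw [← Real.rpow_sum_of_pos hN0]
        congr 1
        rw [Finset.sum_neg_distrib, hsum]
      rw [this]
      simp only [ha, Option.elim]
      rw [Real.rpow_neg_one]
      field_simp
      ring
    rw [this]
    simp [ENNReal.ofReal_pow]
  have hsvol : volume s = 2 ^ (Fintype.card ι + 1) := by
    rw [hs, volume.addHaar_preimage_linearEquiv, LinearEquiv.det_coe_symm, det_shear]
    simp [hboxvol]
  -- convexity, symmetry, compactness
  have h_conv : Convex ℝ s := ((convex_pi fun j _ => convex_Icc _ _)).linear_preimage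
    ((shear x) : (Option ι → ℝ) →ₗ[ℝ] (Option ι → ℝ))
  have h_symm : ∀ v ∈ s, -v ∈ s := by
    intro v hv
    simp only [hs, mem_preimage, map_neg] at hv ⊢
    intro j hj
    have := hv j hj
    simp only [mem_Icc, Pi.neg_apply] at this ⊢
    constructor <;> linarith [this.1, this.2]
  have h_cpt : IsCompact s := by
    have hbc : IsCompact box := isCompact_univ_pi fun j => isCompact_Icc
    have : s = (shear x).symm '' box := by
      rw [hs]
      ext v
      simp [LinearEquiv.image_symm_eq_preimage]
    rw [this]
    exact hbc.image (LinearMap.continuous_of_finiteDimensional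
      ((shear x).symm : (Option ι → ℝ) →ₗ[ℝ] (Option ι → ℝ)))
  -- apply Minkowski
  have hrank : Module.finrank ℝ (Option ι → ℝ) = Fintype.card ι + 1 := by
    simp [Module.finrank_fintype_fun_eq_card]
  have : Countable (Submodule.span ℤ (Set.range ⇑b)).toAddSubgroup := by
    change Countable (Submodule.span ℤ (Set.range ⇑b)); infer_instance
  obtain ⟨u, hu0, hus⟩ := exists_ne_zero_mem_lattice_of_measure_mul_two_pow_le_measure
    fund h_symm h_conv h_cpt (by rw [hF, hsvol, hrank, one_mul])
  -- extract integer coordinates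
  set w : Option ι → ℝ := (u : Option ι → ℝ) with hw
  have hwmem : w ∈ Submodule.span ℤ (Set.range ⇑b) := u.2
  have hmem := (b.mem_span_iff_repr_mem ℤ w).mp hwmem
  have hint : ∀ j, ∃ k : ℤ, w j = k := by
    intro j
    obtain ⟨k, hk⟩ := hmem j
    exact ⟨k, by simpa [hb] using hk.symm⟩
  obtain ⟨q, hq⟩ := hint none
  choose p hp using fun i => hint (some i)
  have hws : w ∈ s := hus
  have hwbox : ∀ j, shear x w j ∈ Icc (-(a j)) (a j) := by
    intro j; exact hws j (mem_univ j)
  have hq_bound : |(q:ℝ)| ≤ N := by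
    have := hwbox none
    simp only [shear, LinearEquiv.coe_mk, ha, Option.elim_none, Option.elim_some, mem_Icc] at this
    rw [abs_le]; rw [← hq]; exact this
  have hp_bound : ∀ i, |(q:ℝ) * x i + (p i : ℝ)| ≤ N ^ (-(r i)) := by
    intro i
    have := hwbox (some i)
    simp only [shear, LinearEquiv.coe_mk, ha, Option.elim_none, Option.elim_some, mem_Icc] at this
    rw [abs_le]
    rw [← hq, ← hp i]
    change -N ^ (-(r i)) ≤ w (some i) + x i * w none ∧ w (some i) + x i * w none ≤ N ^ (-(r i)) at this
    have hc : x i * w none = w none * x i := mul_comm _ _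
    constructor <;> linarith [this.1, this.2]
  refine ⟨p, q, ?_, hq_bound, hp_bound⟩
  -- q ≠ 0
  intro hq0
  apply hu0
  have hw0 : w = 0 := by
    funext j
    cases j with
    | none => simp [hq, hq0]
    | some i =>
        have h1 := hp_bound i
        have h2 : N ^ (-(r i)) < 1 :=
          Real.rpow_lt_one_of_one_lt_of_neg hN (neg_neg_iff_pos.mpr (hr i))
        rw [hq0] at h1
        simp only [Int.cast_zero, zero_mul, zero_add] at h1
        have : |(p i : ℝ)| < 1 := lt_of_le_of_lt h1 h2
        have habs : |p i| < 1 := by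
          rw [← Int.cast_abs] at this
          exact_mod_cast this
        have : p i = 0 := Int.abs_lt_one_iff.mp habs
        rw [hp i, this]; simp
  exact Subtype.ext hw0

/-- Weighted Dirichlet theorem: for any `n`-dimensional weight `r`, `x ∈ ℝⁿ`, and `N > 1`,
there is an integer vector `(p₁,...,pₙ,q)` with `0 < |q| ≤ N` and
`|q * x i + p i| ≤ N^{-r i}` for all `i`. -/
theorem stmt_1 (n : ℕ) (hn : 1 ≤ n) (r : Fin n → ℝ)
    (hr : ∀ i, 0 ≤ r i) (hsum : ∑ i, r i = 1) (x : Fin n → ℝ)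
    (N : ℝ) (hN : 1 < N) :
    ∃ (p : Fin n → ℤ) (q : ℤ), q ≠ 0 ∧ (|q| : ℝ) ≤ N ∧
      ∀ i, |(q : ℝ) * x i + (p i : ℝ)| ≤ N ^ (-(r i)) := by
  classical
  have h1 : ∑ i ∈ Finset.univ.filter (fun i => 0 < r i), r i = ∑ i, r i :=
    Finset.sum_filter_of_ne (fun i _ h => (hr i).lt_of_ne (Ne.symm h))
  have h2 : ∑ i : {i : Fin n // 0 < r i}, r i.1
      = ∑ i ∈ Finset.univ.filter (fun i => 0 < r i), r i :=
    (Finset.sum_subtype _ (fun i => by simp) _).symm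
  obtain ⟨p', q, hq0, hqN, hp'⟩ := key (fun i : {i : Fin n // 0 < r i} => r i.1)
    (fun i => i.2) (by rw [h2, h1, hsum]) (fun i => x i.1) N hN
  refine ⟨fun i => if h : 0 < r i then p' ⟨i, h⟩ else -round ((q:ℝ) * x i), q, hq0, hqN, ?_⟩
  intro i
  by_cases h : 0 < r i
  · simpa [h] using hp' ⟨i, h⟩
  · have hri : r i = 0 := le_antisymm (not_lt.mp h) (hr i)
    rw [hri, neg_zero, Real.rpow_zero]
    simp only [h, dif_neg, not_false_iff, Int.cast_neg]
    have := abs_sub_round ((q:ℝ) * x i)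
    rw [sub_eq_add_neg] at this
    linarith
end

section
/- Let r be an n-dimensional weight and x ∈ ℝ^n. Then x is r-badly approximable (i.e., there exists c > 0 such that max_i |q|^{r_i}|q x_i + p_i| ≥ c for all integer vectors (p_1,...,p_n,q) with q ≠ 0) if and only if the forward orbit {a_r(t) V(x) ℤ^{n+1} : t > 0} is bounded in the space of unimodular lattices, where a_r(t) = diag(e^{r_1 t},...,e^{r_n t}, e^{-t}) and V(x) is the upper unipotent matrix with identity (n×n) block, x in the last column, and 1 in the bottom-right entry. Here a subset of the space of lattices is bounded if and only if there is ε > 0 such that every lattice in the set contains no nonzero vector of sup-norm less than ε. -/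
/-- The diagonal flow `a_r(t) = diag(e^{r₁ t}, ..., e^{rₙ t}, e^{-t})`. -/
noncomputable def arMat (n : ℕ) (r : Fin n → ℝ) (t : ℝ) :
    Matrix (Fin (n + 1)) (Fin (n + 1)) ℝ :=
  Matrix.diagonal fun i =>
    if h : (i : ℕ) < n then Real.exp (r ⟨i, h⟩ * t) else Real.exp (-t)

/-- The unipotent matrix `V(x) = [[Iₙ, x], [0, 1]]`. -/
def VMat (n : ℕ) (x : Fin n → ℝ) : Matrix (Fin (n + 1)) (Fin (n + 1)) ℝ :=
  Matrix.of fun i j =>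
    if i = j then 1
    else if h : (i : ℕ) < n ∧ (j : ℕ) = n then x ⟨i, h.1⟩ else 0

lemma VMat_mulVec (n : ℕ) (x : Fin n → ℝ) (u : Fin (n+1) → ℝ) (i : Fin (n+1)) :
    (VMat n x).mulVec u i =
      u i + (if h : (i:ℕ) < n then x ⟨i,h⟩ * u (Fin.last n) else 0) := by
  rw [Matrix.mulVec, dotProduct, Fin.sum_univ_castSucc]
  have hlast : ((Fin.last n : Fin (n+1)) : ℕ) = n := rfl
  by_cases hi : (i:ℕ) < n
  · have hine : i ≠ Fin.last n := by
      intro h; rw [h, hlast] at hi; exact lt_irrefl n hi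
    rw [dif_pos hi]
    have h1 : ∀ j : Fin n, VMat n x i j.castSucc * u j.castSucc
        = (if (⟨i, hi⟩ : Fin n) = j then u j.castSucc else 0) := by
      intro j
      simp only [VMat, Matrix.of_apply]
      have hjn : ((j.castSucc : Fin (n+1)) : ℕ) ≠ n := by
        simp [Fin.coe_castSucc]; omega
      by_cases h : i = j.castSucc
      · rw [if_pos h, one_mul, if_pos]
        subst h; simp
      · rw [if_neg h, dif_neg (by tauto), zero_mul, if_neg]
        intro hc; apply h; apply Fin.ext; simp [← hc]
    rw [Finset.sum_congr rfl (fun j _ => h1 j), Finset.sum_ite_eq]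
    simp only [Finset.mem_univ, if_pos]
    have : ((⟨i, hi⟩ : Fin n).castSucc) = i := by apply Fin.ext; simp
    rw [this]
    simp only [VMat, Matrix.of_apply, if_neg hine, dif_pos (⟨hi, hlast⟩ : (i:ℕ) < n ∧ ((Fin.last n : Fin (n+1)):ℕ) = n)]

  · have hieq : i = Fin.last n := by
      apply Fin.ext; rw [hlast]; omega
    rw [dif_neg hi, add_zero, hieq]
    have h1 : ∀ j : Fin n, VMat n x (Fin.last n) j.castSucc * u j.castSucc = 0 := by
      intro j
      simp only [VMat, Matrix.of_apply]
      have h2 : Fin.last n ≠ j.castSucc := by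
        intro h; have := congrArg (Fin.val) h; simp [Fin.coe_castSucc] at this; omega
      rw [if_neg h2, dif_neg, zero_mul]
      rw [hlast]; omega
    rw [Finset.sum_congr rfl (fun j _ => h1 j), Finset.sum_const_zero, zero_add]
    simp [VMat]

lemma prod_mulVec (n : ℕ) (r : Fin n → ℝ) (t : ℝ) (x : Fin n → ℝ)
    (u : Fin (n+1) → ℝ) (i : Fin (n+1)) :
    ((arMat n r t * VMat n x).mulVec u) i =
      if h : (i:ℕ) < n then Real.exp (r ⟨i,h⟩ * t) * (u i + x ⟨i,h⟩ * u (Fin.last n))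
      else Real.exp (-t) * u (Fin.last n) := by
  rw [← Matrix.mulVec_mulVec, arMat, Matrix.mulVec_diagonal, VMat_mulVec]
  by_cases h : (i:ℕ) < n
  · rw [dif_pos h, dif_pos h, dif_pos h]
  · rw [dif_neg h, dif_neg h, dif_neg h, add_zero]
    congr 1
    have : i = Fin.last n := by apply Fin.ext; have := i.isLt; simp [Fin.last]; omega
    rw [this]

/-- `x` is `r`-badly approximable iff the forward orbit `{a_r(t) V(x) ℤ^{n+1} : t > 0}` is
bounded in the space of unimodular lattices, i.e. there is `ε > 0` such that no lattice in
the orbit contains a nonzero vector of sup-norm less than `ε`. -/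
theorem stmt_2 (n : ℕ) (hn : 1 ≤ n) (r : Fin n → ℝ)
    (hr : ∀ i, 0 ≤ r i) (hsum : ∑ i, r i = 1) (x : Fin n → ℝ) :
    (∃ c > (0 : ℝ), ∀ (p : Fin n → ℤ) (q : ℤ), q ≠ 0 →
        ∃ i, c ≤ |(q : ℝ)| ^ (r i) * |(q : ℝ) * x i + (p i : ℝ)|) ↔
    (∃ ε > (0 : ℝ), ∀ t > (0 : ℝ), ∀ v : Fin (n + 1) → ℤ, v ≠ 0 →
        ε ≤ ‖(arMat n r t * VMat n x).mulVec fun i => (v i : ℝ)‖) := by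
  have hr1 : ∀ i, r i ≤ 1 := by
    intro i
    rw [← hsum]
    exact Finset.single_le_sum (fun j _ => hr j) (Finset.mem_univ i)
  constructor
  · rintro ⟨c, hc, hba⟩
    refine ⟨min c 1, lt_min hc one_pos, ?_⟩
    intro t ht v hv
    set u : Fin (n+1) → ℝ := fun j => (v j : ℝ) with hu
    set q : ℤ := v (Fin.last n) with hqdef
    have huq : u (Fin.last n) = (q : ℝ) := rfl
    by_cases hq : q = 0
    · -- some v i ≠ 0 with i < n
      obtain ⟨i, hi⟩ := Function.ne_iff.mp hv
      have hine : i ≠ Fin.last n := by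
        intro h; rw [h] at hi; exact hi hq
      have hlt : (i : ℕ) < n := by
        have := i.isLt
        have : (i : ℕ) ≠ n := fun h => hine (Fin.ext h)
        omega
      refine le_trans ?_ (norm_le_pi_norm _ i)
      rw [prod_mulVec, dif_pos hlt]
      have h0 : u (Fin.last n) = 0 := by rw [huq, hq]; norm_num
      rw [h0, mul_zero, add_zero, Real.norm_eq_abs, abs_mul, Real.abs_exp]
      have h1 : (1:ℝ) ≤ |u i| := by
        have : (1:ℤ) ≤ |v i| := Int.one_le_abs hi
        calc (1:ℝ) ≤ |(v i : ℝ)| := by exact_mod_cast this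
        _ = |u i| := rfl
      have h2 : (1:ℝ) ≤ Real.exp (r ⟨i, hlt⟩ * t) := by
        rw [Real.one_le_exp_iff]
        exact mul_nonneg (hr _) ht.le
      calc min c 1 ≤ 1 := min_le_right _ _
        _ ≤ Real.exp (r ⟨i, hlt⟩ * t) * |u i| := by nlinarith
    · by_cases hcase : min c 1 ≤ Real.exp (-t) * |(q:ℝ)|
      · refine le_trans hcase ?_
        refine le_trans ?_ (norm_le_pi_norm _ (Fin.last n))
        rw [prod_mulVec, dif_neg (by simp [Fin.last])]
        rw [Real.norm_eq_abs, abs_mul, Real.abs_exp, huq]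
      · push_neg at hcase
        obtain ⟨i, hi⟩ := hba (fun j => v j.castSucc) q hq
        have hlt : ((i.castSucc : Fin (n+1)) : ℕ) < n := by
          simp [Fin.coe_castSucc, i.isLt]
        refine le_trans ?_ (norm_le_pi_norm _ i.castSucc)
        rw [prod_mulVec, dif_pos hlt]
        have heta : (⟨((i.castSucc : Fin (n+1)) : ℕ), hlt⟩ : Fin n) = i :=
          Fin.ext (by simp)
        rw [heta, Real.norm_eq_abs, abs_mul, Real.abs_exp]
        have hB : u i.castSucc + x i * u (Fin.last n) = (q:ℝ) * x i + ((v i.castSucc : ℤ) : ℝ) := by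
          rw [huq]
          show ((v i.castSucc : ℤ) : ℝ) + x i * (q:ℝ) = _
          ring
        rw [hB]
        set B := |(q:ℝ) * x i + ((v i.castSucc : ℤ) : ℝ)| with hBdef
        set A := |(q:ℝ)| with hA
        have hA1 : (1:ℝ) ≤ A := by
          have : (1:ℤ) ≤ |q| := Int.one_le_abs hq
          calc (1:ℝ) ≤ |(q:ℝ)| := by exact_mod_cast this
          _ = A := rfl
        have hAbd : A ≤ min c 1 * Real.exp t := by
          have h1 : Real.exp (-t) * A < min c 1 := hcase
          have h2 : Real.exp (-t) * Real.exp t = 1 := by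
            rw [← Real.exp_add]; simp
          nlinarith [Real.exp_pos t, Real.exp_pos (-t)]
        have hmin1 : min c 1 ≤ 1 := min_le_right _ _
        have hAet : A ≤ Real.exp t := le_trans hAbd (by nlinarith [Real.exp_pos t])
        have hpow : A ^ (r i) ≤ Real.exp (r i * t) := by
          calc A ^ (r i) ≤ (Real.exp t) ^ (r i) :=
                Real.rpow_le_rpow (by linarith) hAet (hr i)
            _ = Real.exp (t * r i) := (Real.exp_mul t (r i)).symm
            _ = Real.exp (r i * t) := by rw [mul_comm]
        have hBpos : 0 ≤ B := abs_nonneg _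
        calc min c 1 ≤ c := min_le_left _ _
          _ ≤ A ^ (r i) * B := hi
          _ ≤ Real.exp (r i * t) * B := mul_le_mul_of_nonneg_right hpow hBpos
  · rintro ⟨ε, hε, hb⟩
    set ε' := min ε 1 with hε'def
    have hε' : 0 < ε' := lt_min hε one_pos
    have hε'1 : ε' ≤ 1 := min_le_right _ _
    have hε'ε : ε' ≤ ε := min_le_left _ _
    refine ⟨ε' * (ε' / 2), by positivity, ?_⟩
    intro p q hq
    set A := |(q:ℝ)| with hA
    have hA1 : (1:ℝ) ≤ A := by
      have : (1:ℤ) ≤ |q| := Int.one_le_abs hq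
      calc (1:ℝ) ≤ |(q:ℝ)| := by exact_mod_cast this
      _ = A := rfl
    set T := 2 * A / ε' with hT
    have hT1 : 1 < T := by
      rw [hT, lt_div_iff₀ hε']
      nlinarith
    set t := Real.log T with htdef
    have ht : 0 < t := Real.log_pos hT1
    have hexp : Real.exp t = T := Real.exp_log (by linarith)
    have hexpneg : Real.exp (-t) = ε' / (2 * A) := by
      rw [Real.exp_neg, hexp, hT, inv_div]
    set v : Fin (n+1) → ℤ := fun j => if h : (j:ℕ) < n then p ⟨j, h⟩ else q with hvdef
    have hvlast : v (Fin.last n) = q := by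
      rw [hvdef]; exact dif_neg (by simp [Fin.last])
    have hvcast : ∀ i : Fin n, v i.castSucc = p i := by
      intro i
      have hlt : ((i.castSucc : Fin (n+1)):ℕ) < n := by simp [i.isLt]
      show (if h : ((i.castSucc : Fin (n+1)):ℕ) < n then p ⟨((i.castSucc : Fin (n+1)):ℕ), h⟩ else q) = p i
      rw [dif_pos hlt]
      congr 1
    have hv : v ≠ 0 := by
      intro h
      apply hq
      rw [← hvlast, h]; rfl
    have hball := hb t ht v hv
    set w : Fin (n+1) → ℝ := (arMat n r t * VMat n x).mulVec fun j => ((v j : ℤ) : ℝ) with hw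
    have hlastcomp : w (Fin.last n) = Real.exp (-t) * (q:ℝ) := by
      rw [hw, prod_mulVec, dif_neg (by simp [Fin.last])]
      rw [hvlast]
    have hcomp : ∀ i : Fin n, w i.castSucc
        = Real.exp (r i * t) * ((q:ℝ) * x i + ((p i : ℤ):ℝ)) := by
      intro i
      have hlt : ((i.castSucc : Fin (n+1)) : ℕ) < n := by
        simp [Fin.coe_castSucc, i.isLt]
      rw [hw, prod_mulVec, dif_pos hlt]
      have heta : (⟨((i.castSucc : Fin (n+1)) : ℕ), hlt⟩ : Fin n) = i :=
        Fin.ext (by simp)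
      rw [heta, hvlast, hvcast]
      ring
    have hlastabs : |w (Fin.last n)| = ε' / 2 := by
      rw [hlastcomp, abs_mul, Real.abs_exp, hexpneg, ← hA]
      have hApos : (0:ℝ) < A := by linarith
      field_simp
    have hex : ∃ i : Fin n, ε' ≤ Real.exp (r i * t) * |(q:ℝ) * x i + ((p i : ℤ):ℝ)| := by
      by_contra hcon
      push_neg at hcon
      have hnorm : ‖w‖ < ε' := by
        rw [pi_norm_lt_iff hε']
        intro j
        rw [Real.norm_eq_abs]
        by_cases hj : (j:ℕ) < n
        · have hjeq : j = (⟨(j:ℕ), hj⟩ : Fin n).castSucc := Fin.ext (by simp)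
          rw [hjeq, hcomp, abs_mul, Real.abs_exp]
          exact hcon _
        · have hjeq : j = Fin.last n := by
            have := j.isLt
            exact Fin.ext (by simp [Fin.last]; omega)
          rw [hjeq, hlastabs]
          linarith
      have : ε' ≤ ‖w‖ := le_trans hε'ε hball
      linarith
    obtain ⟨i, hi⟩ := hex
    refine ⟨i, ?_⟩
    set B := |(q:ℝ) * x i + ((p i : ℤ):ℝ)| with hBdef
    have hBpos : 0 ≤ B := abs_nonneg _
    have hexppos : (0:ℝ) < Real.exp (r i * t) := Real.exp_pos _
    have hB : ε' / Real.exp (r i * t) ≤ B := by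
      rw [div_le_iff₀ hexppos]
      linarith [hi]
    have hpow : Real.exp (r i * t) = (Real.exp t) ^ (r i) := by
      rw [mul_comm, Real.exp_mul]
    have hArpos : (0:ℝ) < A ^ (r i) := Real.rpow_pos_of_pos (by linarith) _
    have hkey : A ^ (r i) / Real.exp (r i * t) = (ε' / 2) ^ (r i) := by
      rw [hpow, ← Real.div_rpow (by linarith) (Real.exp_pos t).le]
      congr 1
      rw [hexp, hT]
      have hApos : (0:ℝ) < A := by linarith
      field_simp
    have hup : (ε' / 2) ^ (r i) ≥ ε' / 2 := by
      have h1 : (ε'/2) ^ (r i) ≥ (ε'/2) ^ (1:ℝ) :=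
        Real.rpow_le_rpow_of_exponent_ge (by linarith) (by linarith) (hr1 i)
      rwa [Real.rpow_one] at h1
    calc ε' * (ε' / 2) ≤ ε' * (ε' / 2) ^ (r i) := by nlinarith
      _ = (A ^ (r i) / Real.exp (r i * t)) * ε' := by rw [hkey]; ring
      _ = A ^ (r i) * (ε' / Real.exp (r i * t)) := by ring
      _ ≤ A ^ (r i) * B := mul_le_mul_of_nonneg_left hB (le_of_lt hArpos)
end

section
/- Let r = (r_1,...,r_n) be an n-dimensional weight and x ∈ ℝ^n. The following are equivalent: (1) there exists c > 0 such that for any integer vector (p_1,...,p_n,q) with q ≠ 0, max_{1≤i≤n} |q|^{r_i}|q x_i + p_i| ≥ c; (2) there exists c' > 0 such that for any real N ≥ 1, the only integer solution (a_0, a_1,...,a_n) to the system |a_0 + a_1 x_1 + ... + a_n x_n| < c' N^{-1} and |a_i| < N^{r_i} for all 1 ≤ i ≤ n is a_0 = a_1 = ... = a_n = 0. -/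
open Finset

/-! Auxiliary definitions and lemmas for the transference between the
simultaneous and dual forms of weighted badly approximable vectors
(Lemma 1 of Beresnevich, going back to Mahler). -/

def SimAppr {n : ℕ} (r x : Fin n → ℝ) (ε : ℝ) : Prop :=
  ∃ Q : ℝ, 1 ≤ Q ∧ ∃ q : ℤ, ∃ p : Fin n → ℤ, q ≠ 0 ∧ |(q : ℝ)| ≤ ε * Q ∧
    ∀ i, |(q : ℝ) * x i + (p i : ℝ)| ≤ ε / Q ^ (r i)

def DualAppr {n : ℕ} (r x : Fin n → ℝ) (η : ℝ) : Prop :=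
  ∃ N : ℝ, 1 ≤ N ∧ ∃ a0 : ℤ, ∃ a : Fin n → ℤ, a ≠ 0 ∧
    |(a0 : ℝ) + ∑ i, (a i : ℝ) * x i| ≤ η / N ∧ ∀ i, |(a i : ℝ)| ≤ η * N ^ (r i)

lemma exists_rho {n : ℕ} (r : Fin n → ℝ) (hr : ∀ i, 0 ≤ r i) (hsum : ∑ i, r i = 1) :
    ∃ ρ > 0, ∀ i, 0 < r i → ρ ≤ r i := by
  classical
  set s := Finset.univ.filter (fun i => 0 < r i) with hs
  have hne : s.Nonempty := by
    by_contra h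
    rw [Finset.not_nonempty_iff_eq_empty, hs, Finset.filter_eq_empty_iff] at h
    have : ∑ i, r i = 0 := Finset.sum_eq_zero fun i _ => le_antisymm
      (not_lt.1 (h (Finset.mem_univ i))) (hr i)
    rw [hsum] at this; norm_num at this
  have hmem : ∀ i, 0 < r i → i ∈ s := fun i hi => by
    rw [hs]; exact Finset.mem_filter.2 ⟨Finset.mem_univ i, hi⟩
  set t := s.image r with ht
  have hte : t.Nonempty := hne.image r
  refine ⟨t.min' hte, ?_, fun i hi => Finset.min'_le _ _ ?_⟩
  · have h2 := t.min'_mem hte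
    obtain ⟨j, hj, hje⟩ := Finset.mem_image.1 h2
    rw [hs, Finset.mem_filter] at hj
    rw [← hje]; exact hj.2
  · exact Finset.mem_image.2 ⟨i, hmem i hi, rfl⟩

lemma lemA {n : ℕ} (r x : Fin n → ℝ) (hr : ∀ i, 0 ≤ r i) (hsum : ∑ i, r i = 1)
    (h : ∀ c : ℝ, 0 < c → ∃ (p : Fin n → ℤ) (q : ℤ), q ≠ 0 ∧
      ∀ i, |(q : ℝ)| ^ (r i) * |(q : ℝ) * x i + (p i : ℝ)| < c)
    {ε : ℝ} (hε : 0 < ε) (hε1 : ε ≤ 1) : SimAppr r x ε := by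
  obtain ⟨p, q, hq0, hlt⟩ := h (ε * ε) (by positivity)
  have hq1 : (1:ℝ) ≤ |(q : ℝ)| := by exact_mod_cast Int.one_le_abs hq0
  set Q : ℝ := |(q : ℝ)| / ε with hQdef
  have hQ0 : 0 < Q := by positivity
  have hεQ : ε * Q = |(q : ℝ)| := by rw [hQdef]; field_simp
  refine ⟨Q, ?_, q, p, hq0, le_of_eq hεQ.symm, fun i => ?_⟩
  · rw [hQdef, le_div_iff₀ hε]; linarith
  · have hQr : (0:ℝ) < Q ^ (r i) := Real.rpow_pos_of_pos hQ0 _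
    have hr1 : r i ≤ 1 := by
      rw [← hsum]; exact Finset.single_le_sum (fun j _ => hr j) (Finset.mem_univ i)
    have hmul : |(q : ℝ)| ^ (r i) = ε ^ (r i) * Q ^ (r i) := by
      rw [← Real.mul_rpow hε.le hQ0.le, hεQ]
    have h1 : ε ^ (r i) * Q ^ (r i) * |(q : ℝ) * x i + (p i : ℝ)| < ε * ε := by
      rw [← hmul]; exact hlt i
    have h2 : ε ≤ ε ^ (r i) := by
      nth_rewrite 1 [← Real.rpow_one ε]
      exact Real.rpow_le_rpow_of_exponent_ge hε hε1 hr1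
    rw [le_div_iff₀ hQr]
    nlinarith [abs_nonneg ((q : ℝ) * x i + (p i : ℝ)), Real.rpow_pos_of_pos hε (r i), hQr, hε]

lemma lemC {n : ℕ} (r x : Fin n → ℝ) (hr : ∀ i, 0 ≤ r i) (hsum : ∑ i, r i = 1)
    (h : ∀ c' : ℝ, 0 < c' → ∃ N : ℝ, 1 ≤ N ∧ ∃ (a0 : ℤ) (a : Fin n → ℤ),
      (|(a0 : ℝ) + ∑ i, (a i : ℝ) * x i| < c' * N⁻¹ ∧ ∀ i, |(a i : ℝ)| < N ^ (r i)) ∧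
      ¬(a0 = 0 ∧ a = 0))
    {η : ℝ} (hη : 0 < η) (hη1 : η < 1) : DualAppr r x η := by
  obtain ⟨ρ, hρ0, hρ⟩ := exists_rho r hr hsum
  set s : ℝ := η ^ (-(1/ρ)) with hsdef
  have hs1 : 1 ≤ s := by
    rw [hsdef]
    exact Real.one_le_rpow_of_pos_of_le_one_of_nonpos hη hη1.le
      (neg_nonpos.2 (by positivity))
  have hs0 : 0 < s := lt_of_lt_of_le zero_lt_one hs1
  set c' : ℝ := η / s with hc'def
  have hc'0 : 0 < c' := by positivity
  have hc'η : c' ≤ η := by rw [hc'def]; exact div_le_self hη.le hs1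
  obtain ⟨N, hN1, a0, a, ⟨hL, ha⟩, hnz⟩ := h c' hc'0
  have hN0 : (0:ℝ) < N := lt_of_lt_of_le zero_lt_one hN1
  have hrpos : ∀ i, a i ≠ 0 → 0 < r i := by
    intro i hai
    rcases (hr i).lt_or_eq with h' | h'
    · exact h'
    · exfalso
      have h1 : |(a i : ℝ)| < N ^ (r i) := ha i
      rw [← h', Real.rpow_zero] at h1
      have h2 : (1:ℝ) ≤ |(a i : ℝ)| := by exact_mod_cast Int.one_le_abs hai
      linarith
  have hane : a ≠ 0 := by
    intro hae
    apply hnz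
    refine ⟨?_, hae⟩
    have h1 : |(a0 : ℝ)| < c' * N⁻¹ := by
      have : ∑ i, (a i : ℝ) * x i = 0 := by
        rw [hae]; simp
      rw [← add_zero ((a0:ℝ)), ← this]
      exact hL
    have h2 : c' * N⁻¹ ≤ c' := by
      have hN1' : N⁻¹ ≤ 1 := by
        rw [inv_le_one_iff₀]; right; exact hN1
      nlinarith
    have h3 : |(a0 : ℝ)| < 1 := by linarith
    have h4 : a0 = 0 := by
      by_contra ha0
      have : (1:ℝ) ≤ |(a0 : ℝ)| := by exact_mod_cast Int.one_le_abs ha0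
      linarith
    exact h4
  refine ⟨s * N, ?_, a0, a, hane, ?_, fun i => ?_⟩
  · nlinarith
  · have heq : c' * N⁻¹ = η / (s * N) := by
      rw [hc'def]; field_simp
    rw [← heq]; exact hL.le
  · by_cases hai : a i = 0
    · rw [hai]; simp; positivity
    · have hri : 0 < r i := hrpos i hai
      have hρi : ρ ≤ r i := hρ i hri
      have hmul : (s * N) ^ (r i) = s ^ (r i) * N ^ (r i) :=
        Real.mul_rpow hs0.le hN0.le
      have hsr : s ^ (r i) = η ^ (-(1/ρ) * r i) := by
        rw [hsdef, ← Real.rpow_mul hη.le]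
      have hcomb : η * s ^ (r i) = η ^ (1 + -(1/ρ) * r i) := by
        rw [hsr, Real.rpow_add hη, Real.rpow_one]
      have hexp : 1 + -(1/ρ) * r i ≤ 0 := by
        have h5 : (1:ℝ) ≤ r i / ρ := (one_le_div hρ0).2 hρi
        have h6 : 1 + -(1/ρ) * r i = 1 - r i / ρ := by ring
        rw [h6]
        linarith
      have h7 : (1:ℝ) ≤ η * s ^ (r i) := by
        rw [hcomb]
        exact Real.one_le_rpow_of_pos_of_le_one_of_nonpos hη hη1.le hexp
      have h8 : (0:ℝ) < N ^ (r i) := Real.rpow_pos_of_pos hN0 _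
      have h9 : |(a i : ℝ)| < N ^ (r i) := ha i
      rw [hmul]
      nlinarith

lemma core1 {n : ℕ} (hn : 1 ≤ n) (r x : Fin n → ℝ) (hr : ∀ i, 0 ≤ r i)
    (hsum : ∑ i, r i = 1) {ε η : ℝ} (hε : 0 < ε) (hε1 : ε < 1) (hη : 0 < η)
    (hpow : 2 * ε ≤ η ^ n) :
    SimAppr r x ε → DualAppr r x (n * η) := by
  classical
  rintro ⟨Q, hQ1, q, p, hq0, hqle, hb⟩
  have hq1 : (1 : ℝ) ≤ |(q : ℝ)| := by
    have := Int.one_le_abs hq0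
    exact_mod_cast this
  set Qs : ℝ := |(q : ℝ)| / ε with hQs
  have hQs1 : 1 ≤ Qs := by
    rw [hQs, le_div_iff₀ hε]; linarith
  have hQs0 : 0 < Qs := lt_of_lt_of_le zero_lt_one hQs1
  have hQsQ : Qs ≤ Q := by
    rw [hQs, div_le_iff₀ hε]; linarith [hqle]
  have hεQs : ε * Qs = |(q : ℝ)| := by
    rw [hQs]; field_simp
  have hb' : ∀ i, |(q : ℝ) * x i + (p i : ℝ)| ≤ ε / Qs ^ (r i) := by
    intro i
    refine (hb i).trans ?_
    have h1 : Qs ^ (r i) ≤ Q ^ (r i) := Real.rpow_le_rpow hQs0.le hQsQ (hr i)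
    have h2 : (0:ℝ) < Qs ^ (r i) := Real.rpow_pos_of_pos hQs0 _
    exact div_le_div_of_nonneg_left hε.le h2 h1
  set M : Fin n → ℕ := fun i => ⌈η * Qs ^ (r i)⌉₊ with hM
  have hMpos : ∀ i, (0:ℝ) < η * Qs ^ (r i) := fun i => by positivity
  have hM0 : ∀ i, 0 < M i := fun i => Nat.ceil_pos.2 (hMpos i)
  have hMge : ∀ i, η * Qs ^ (r i) ≤ (M i : ℝ) := fun i => Nat.le_ceil _
  have hMlt : ∀ i, (M i : ℝ) < η * Qs ^ (r i) + 1 := fun i =>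
    Nat.ceil_lt_add_one (hMpos i).le
  set S : Finset (Fin n → ℤ) := Finset.Icc 0 (fun i => (M i : ℤ) - 1) with hS
  have hScard : S.card = ∏ i, M i := by
    rw [hS, Pi.card_Icc]
    refine Finset.prod_congr rfl fun i _ => ?_
    rw [Int.card_Icc]
    simp
  set T : Finset ℤ := Finset.Ico 0 |q| with hT
  have hTcard : T.card = q.natAbs := by
    rw [hT, Int.card_Ico, Int.abs_eq_natAbs]
    omega
  set G : (Fin n → ℤ) → ℤ := fun v => (∑ i, v i * p i) % |q| with hG
  have hmaps : ∀ v ∈ S, G v ∈ T := by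
    intro v _
    rw [hT, Finset.mem_Ico]
    exact ⟨Int.emod_nonneg _ (abs_ne_zero.2 hq0), Int.emod_lt_of_pos _ (abs_pos.2 hq0)⟩
  have hprodreal : (q.natAbs : ℝ) < ∏ i, (M i : ℝ) := by
    have e1 : ∏ i, (η * Qs ^ (r i)) = η ^ n * Qs := by
      rw [Finset.prod_mul_distrib, Finset.prod_const, ← Real.rpow_sum_of_pos hQs0, hsum,
        Real.rpow_one, Finset.card_univ, Fintype.card_fin]
    have e2 : ∏ i, (η * Qs ^ (r i)) ≤ ∏ i, (M i : ℝ) :=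
      Finset.prod_le_prod (fun i _ => (hMpos i).le) (fun i _ => hMge i)
    have e3 : (q.natAbs : ℝ) = |(q : ℝ)| := by
      rw [Nat.cast_natAbs]; push_cast; rfl
    have e4 : η ^ n * Qs ≥ 2 * ε * Qs := by
      apply mul_le_mul_of_nonneg_right hpow hQs0.le
    have e5 : 2 * ε * Qs = 2 * |(q : ℝ)| := by
      rw [mul_assoc, hεQs]
    nlinarith [hq1]
  have hcard : T.card < S.card := by
    rw [hTcard, hScard]
    have : (∏ i, (M i : ℝ)) = ((∏ i, M i : ℕ) : ℝ) := by push_cast; rfl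
    rw [this] at hprodreal
    exact_mod_cast hprodreal
  obtain ⟨v, hv, w, hw, hvw, hGvw⟩ :=
    Finset.exists_ne_map_eq_of_card_lt_of_maps_to hcard hmaps
  set b : Fin n → ℤ := v - w with hbdef
  have hbne : b ≠ 0 := sub_ne_zero.2 hvw
  have hvS := hv; have hwS := hw
  rw [hS, Finset.mem_Icc] at hvS hwS
  have hbabs : ∀ i, |(b i : ℝ)| ≤ η * Qs ^ (r i) := by
    intro i
    have h1 : (0:ℤ) ≤ v i := hvS.1 i
    have h2 : v i ≤ (M i : ℤ) - 1 := hvS.2 i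
    have h3 : (0:ℤ) ≤ w i := hwS.1 i
    have h4 : w i ≤ (M i : ℤ) - 1 := hwS.2 i
    have h5 : |b i| ≤ (M i : ℤ) - 1 := by
      rw [hbdef]; simp only [Pi.sub_apply]
      rw [abs_le]; omega
    have h6 : |(b i : ℝ)| ≤ (M i : ℝ) - 1 := by exact_mod_cast h5
    have := hMlt i
    linarith
  have hdvd : q ∣ ∑ i, b i * p i := by
    have hmod : Int.ModEq |q| (∑ i, v i * p i) (∑ i, w i * p i) := hGvw
    have h7 : |q| ∣ (∑ i, v i * p i) - (∑ i, w i * p i) := (Int.modEq_iff_dvd.1 hmod.symm)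
    have h8 : (∑ i, v i * p i) - (∑ i, w i * p i) = ∑ i, b i * p i := by
      rw [hbdef, ← Finset.sum_sub_distrib]
      refine Finset.sum_congr rfl fun i _ => ?_
      simp [sub_mul]
    rw [h8] at h7
    exact (abs_dvd _ _).1 h7
  set b0 : ℤ := (∑ i, b i * p i) / q with hb0def
  have hb0 : q * b0 = ∑ i, b i * p i := Int.mul_ediv_cancel' hdvd
  set L : ℝ := (b0 : ℝ) + ∑ i, (b i : ℝ) * x i with hL
  have hqL : (q : ℝ) * L = ∑ i, (b i : ℝ) * ((q : ℝ) * x i + (p i : ℝ)) := by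
    have hcast : (q : ℝ) * (b0 : ℝ) = ∑ i, (b i : ℝ) * (p i : ℝ) := by
      have := congrArg (fun z : ℤ => (z : ℝ)) hb0
      push_cast at this
      exact this
    rw [hL, mul_add, hcast, Finset.mul_sum, ← Finset.sum_add_distrib]
    refine Finset.sum_congr rfl fun i _ => ?_
    ring
  have habs : |(q : ℝ)| * |L| ≤ (n : ℝ) * (η * ε) := by
    rw [← abs_mul, hqL]
    calc |∑ i, (b i : ℝ) * ((q : ℝ) * x i + (p i : ℝ))|
        ≤ ∑ i, |(b i : ℝ) * ((q : ℝ) * x i + (p i : ℝ))| := Finset.abs_sum_le_sum_abs _ _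
      _ ≤ ∑ _i : Fin n, η * ε := by
          refine Finset.sum_le_sum fun i _ => ?_
          rw [abs_mul]
          have h2 : (0:ℝ) < Qs ^ (r i) := Real.rpow_pos_of_pos hQs0 _
          calc |(b i : ℝ)| * |(q : ℝ) * x i + (p i : ℝ)|
              ≤ (η * Qs ^ (r i)) * (ε / Qs ^ (r i)) := by
                apply mul_le_mul (hbabs i) (hb' i) (abs_nonneg _) (hMpos i).le
            _ = η * ε := by field_simp
      _ = (n : ℝ) * (η * ε) := by rw [Finset.sum_const, Finset.card_univ, Fintype.card_fin]; simp
  have hLbound : |L| ≤ ((n : ℝ) * η) / Qs := by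
    rw [le_div_iff₀ hQs0]
    calc |L| * Qs = (|(q:ℝ)| * |L|) / ε := by
          rw [← hεQs]; field_simp
      _ ≤ ((n : ℝ) * (η * ε)) / ε := by
          gcongr
      _ = (n : ℝ) * η := by field_simp
  refine ⟨Qs, hQs1, b0, b, hbne, hLbound, fun i => ?_⟩
  refine (hbabs i).trans ?_
  have h2 : (0:ℝ) ≤ Qs ^ (r i) := (Real.rpow_pos_of_pos hQs0 _).le
  have hn' : (1:ℝ) ≤ (n:ℝ) := by exact_mod_cast hn
  nlinarith [mul_nonneg (mul_nonneg (sub_nonneg.2 hn') hη.le) h2]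

set_option maxHeartbeats 2000000 in
lemma core2 {n : ℕ} (hn : 1 ≤ n) (r x : Fin n → ℝ) (hr : ∀ i, 0 ≤ r i)
    (hsum : ∑ i, r i = 1) {ε η : ℝ} (hε : 0 < ε) (hε1 : ε ≤ 1) (hη : 0 < η)
    (hη1 : η < 1) (hpow : 2 ^ n * η ≤ ε ^ n) :
    DualAppr r x η → SimAppr r x (n * ε) := by
  classical
  rintro ⟨N, hN1, a0, a, hane, hLb, hab⟩
  set L : ℝ := (a0 : ℝ) + ∑ i, (a i : ℝ) * x i with hLdef
  have hN0 : (0:ℝ) < N := lt_of_lt_of_le zero_lt_one hN1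
  have habs1 : ∀ i, a i ≠ 0 → (1:ℝ) ≤ |(a i : ℝ)| := by
    intro i hai; exact_mod_cast Int.one_le_abs hai
  have hrpos : ∀ i, a i ≠ 0 → 0 < r i := by
    intro i hai
    rcases (hr i).lt_or_eq with h | h
    · exact h
    · exfalso
      have h1 : |(a i : ℝ)| ≤ η * N ^ (r i) := hab i
      rw [← h, Real.rpow_zero, mul_one] at h1
      linarith [habs1 i hai]
  set S : Finset (Fin n) := Finset.univ.filter (fun i => a i ≠ 0) with hSdef
  have hSne : S.Nonempty := by
    obtain ⟨i, hi⟩ := Function.ne_iff.1 hane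
    exact ⟨i, by rw [hSdef]; exact Finset.mem_filter.2 ⟨Finset.mem_univ i, hi⟩⟩
  have hSmem : ∀ i, i ∈ S ↔ a i ≠ 0 := by
    intro i; rw [hSdef, Finset.mem_filter]; simp
  set f : Fin n → ℝ := fun i => (|(a i : ℝ)| / η) ^ ((1 : ℝ) / r i) with hfdef
  have hbase : ∀ i ∈ S, (1:ℝ) ≤ |(a i : ℝ)| / η := by
    intro i hi
    rw [le_div_iff₀ hη]
    have := habs1 i ((hSmem i).1 hi)
    linarith
  have hf1 : ∀ i ∈ S, (1:ℝ) ≤ f i := by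
    intro i hi
    rw [hfdef]
    exact Real.one_le_rpow (hbase i hi) (one_div_nonneg.2 (hrpos i ((hSmem i).1 hi)).le)
  have hfpow : ∀ i ∈ S, (f i) ^ (r i) = |(a i : ℝ)| / η := by
    intro i hi
    have hri := hrpos i ((hSmem i).1 hi)
    rw [hfdef, ← Real.rpow_mul (by positivity), one_div_mul_cancel hri.ne', Real.rpow_one]
  have hfN : ∀ i ∈ S, f i ≤ N := by
    intro i hi
    have hri := hrpos i ((hSmem i).1 hi)
    have h1 : (f i) ^ (r i) ≤ N ^ (r i) := by
      rw [hfpow i hi, div_le_iff₀ hη]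
      linarith [hab i]
    by_contra hcon
    push_neg at hcon
    have h2 : N ^ (r i) < (f i) ^ (r i) :=
      Real.rpow_lt_rpow hN0.le hcon hri
    linarith
  obtain ⟨j, hjS, hjmax⟩ := Finset.exists_mem_eq_sup' hSne f
  set N' : ℝ := f j with hN'def
  have haj : a j ≠ 0 := (hSmem j).1 hjS
  have hrj : 0 < r j := hrpos j haj
  have hN'1 : 1 ≤ N' := hf1 j hjS
  have hN'0 : (0:ℝ) < N' := lt_of_lt_of_le zero_lt_one hN'1
  have hN'N : N' ≤ N := hfN j hjS
  have hNr'pos : ∀ i, (0:ℝ) < N' ^ (r i) := fun i => Real.rpow_pos_of_pos hN'0 _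
  have hNr'1 : ∀ i, (1:ℝ) ≤ N' ^ (r i) := fun i => Real.one_le_rpow hN'1 (hr i)
  have hajeq : |(a j : ℝ)| = η * N' ^ (r j) := by
    have h1 : N' ^ (r j) = |(a j : ℝ)| / η := hfpow j hjS
    rw [h1]; field_simp
  have hab' : ∀ i, |(a i : ℝ)| ≤ η * N' ^ (r i) := by
    intro i
    by_cases hai : a i = 0
    · rw [hai]; simp; positivity
    · have hiS : i ∈ S := (hSmem i).2 hai
      have h1 : f i ≤ N' := by
        have h0 : f i ≤ S.sup' hSne f := Finset.le_sup' f hiS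
        rw [hjmax] at h0; exact h0
      have h2 : (f i) ^ (r i) ≤ N' ^ (r i) :=
        Real.rpow_le_rpow (by positivity) h1 (hr i)
      rw [hfpow i hiS, div_le_iff₀ hη] at h2
      linarith
  have hLb' : |L| ≤ η / N' := by
    refine hLb.trans ?_
    exact div_le_div_of_nonneg_left hη.le hN'0 hN'N
  set B : Fin n → ℕ := fun i => ⌈N' ^ (r i) / ε⌉₊ with hBdef
  have hargpos : ∀ i, (0:ℝ) < N' ^ (r i) / ε := fun i => by positivity
  have harg1 : ∀ i, (1:ℝ) ≤ N' ^ (r i) / ε := fun i => by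
    rw [le_div_iff₀ hε, one_mul]; exact le_trans hε1 (hNr'1 i)
  have hB1 : ∀ i, 1 ≤ B i := fun i => Nat.one_le_ceil_iff.2 (hargpos i)
  have hBge : ∀ i, N' ^ (r i) / ε ≤ (B i : ℝ) := fun i => Nat.le_ceil _
  have hBpos : ∀ i, (0:ℝ) < (B i : ℝ) := fun i => by
    exact_mod_cast Nat.lt_of_lt_of_le Nat.zero_lt_one (hB1 i)
  have hBle : ∀ i, (B i : ℝ) ≤ 2 * (N' ^ (r i) / ε) := by
    intro i
    have h1 : (B i : ℝ) < N' ^ (r i) / ε + 1 := Nat.ceil_lt_add_one (hargpos i).le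
    linarith [harg1 i]
  have hBinv : ∀ i, (1:ℝ) / (B i : ℝ) ≤ ε / N' ^ (r i) := by
    intro i
    rw [div_le_div_iff₀ (hBpos i) (hNr'pos i)]
    have := hBge i
    rw [div_le_iff₀ hε] at this
    linarith
  set m : ℕ := (a j).natAbs with hmdef
  have hm0 : 0 < m := Int.natAbs_pos.2 haj
  have hmreal : (m : ℝ) = η * N' ^ (r j) := by
    rw [← hajeq, hmdef]
    push_cast [Nat.cast_natAbs]
    rfl
  set K : ℕ := ⌊ε * N'⌋₊ with hKdef
  have hKle : (K : ℝ) ≤ ε * N' := Nat.floor_le (by positivity)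
  have hKgt : ε * N' < (K : ℝ) + 1 := Nat.lt_floor_add_one _
  set P : ℕ → Fin n → ℤ := fun u i => ⌊(u : ℝ) * x i⌋ with hPdef
  set D : ℕ → ℤ := fun u => (u : ℤ) * a0 + ∑ i ∈ Finset.univ.erase j, a i * P u i
    with hDdef
  set F : ℕ → (Fin n → ℤ) × ℤ := fun u =>
    (fun i => if i = j then 0 else ⌊Int.fract ((u : ℝ) * x i) * (B i : ℝ)⌋,
      D u % (m : ℤ)) with hFdef
  set V : Finset ((Fin n → ℤ) × ℤ) :=
    (Finset.Icc 0 (fun i => if i = j then 0 else (B i : ℤ) - 1)) ×ˢ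
      (Finset.Ico (0:ℤ) (m : ℤ)) with hVdef
  have hmaps : ∀ u ∈ Finset.range (K + 1), F u ∈ V := by
    intro u _
    rw [hVdef, Finset.mem_product]
    constructor
    · rw [Finset.mem_Icc]
      constructor
      · rw [Pi.le_def]
        intro i
        by_cases hij : i = j
        · simp [hFdef, hij]
        · simp only [hFdef, hij, if_false, Pi.zero_apply]
          refine Int.floor_nonneg.2 ?_
          exact mul_nonneg (Int.fract_nonneg _) (hBpos i).le
      · rw [Pi.le_def]
        intro i
        by_cases hij : i = j
        · simp [hFdef, hij]
        · simp only [hFdef, hij, if_false]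
          have h1 : Int.fract ((u : ℝ) * x i) * (B i : ℝ) < (B i : ℝ) := by
            nlinarith [Int.fract_lt_one ((u : ℝ) * x i), hBpos i,
              Int.fract_nonneg ((u : ℝ) * x i)]
          have h2 : ⌊Int.fract ((u : ℝ) * x i) * (B i : ℝ)⌋ < (B i : ℤ) :=
            Int.floor_lt.2 (by exact_mod_cast h1)
          omega
    · rw [Finset.mem_Ico]
      have hm0' : (m : ℤ) ≠ 0 := by exact_mod_cast hm0.ne'
      exact ⟨Int.emod_nonneg _ hm0', Int.emod_lt_of_pos _ (by exact_mod_cast hm0)⟩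
  have hVcard : (V.card : ℝ) ≤ ε * N' := by
    have h1 : V.card = (∏ i, if i = j then 1 else B i) * m := by
      rw [hVdef, Finset.card_product, Pi.card_Icc, Int.card_Ico]
      congr 1
      · refine Finset.prod_congr rfl fun i _ => ?_
        rw [Int.card_Icc]
        by_cases hij : i = j <;> simp [hij]
    have h2 : ∏ i, (if i = j then (1:ℝ) else B i) = ∏ i ∈ Finset.univ.erase j, (B i : ℝ) := by
      rw [← Finset.prod_erase_mul _ _ (Finset.mem_univ j), if_pos rfl, mul_one]
      exact Finset.prod_congr rfl fun i hi => if_neg (Finset.ne_of_mem_erase hi)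
    have h3 : ∏ i ∈ Finset.univ.erase j, (B i : ℝ) ≤
        ∏ i ∈ Finset.univ.erase j, (2 / ε * N' ^ (r i)) := by
      refine Finset.prod_le_prod (fun i _ => (hBpos i).le) (fun i _ => ?_)
      calc (B i : ℝ) ≤ 2 * (N' ^ (r i) / ε) := hBle i
        _ = 2 / ε * N' ^ (r i) := by ring
    have h4 : ∏ i ∈ Finset.univ.erase j, (2 / ε * N' ^ (r i)) =
        (2 / ε) ^ (n - 1) * N' ^ (1 - r j) := by
      rw [Finset.prod_mul_distrib, Finset.prod_const, ← Real.rpow_sum_of_pos hN'0]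
      congr 2
      · rw [Finset.card_erase_of_mem (Finset.mem_univ j), Finset.card_univ, Fintype.card_fin]
      · have := Finset.add_sum_erase Finset.univ r (Finset.mem_univ j)
        rw [hsum] at this
        linarith
    have h5 : (2 / ε) ^ (n - 1) * N' ^ (1 - r j) * (m : ℝ) = (2/ε) ^ (n-1) * η * N' := by
      rw [hmreal]
      have hNN : N' ^ (1 - r j) * N' ^ (r j) = N' := by
        rw [← Real.rpow_add hN'0]; norm_num
      calc (2 / ε) ^ (n - 1) * N' ^ (1 - r j) * (η * N' ^ (r j))
          = (2/ε) ^ (n-1) * η * (N' ^ (1 - r j) * N' ^ (r j)) := by ring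
        _ = (2/ε) ^ (n-1) * η * N' := by rw [hNN]
    have h6 : (2/ε) ^ (n-1) * η ≤ ε := by
      obtain ⟨k, hk⟩ : ∃ k, n = k + 1 := ⟨n - 1, (Nat.succ_pred_eq_of_pos hn).symm⟩
      have hkn : n - 1 = k := by omega
      rw [hkn]
      have he1 : ε ^ n = ε ^ k * ε := by rw [hk, pow_succ]
      have he2 : (2:ℝ) ^ n = 2 ^ k * 2 := by rw [hk, pow_succ]
      have hεp : (0:ℝ) < ε ^ k := by positivity
      rw [div_pow, div_mul_eq_mul_div, div_le_iff₀ hεp]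
      have h7 : (0:ℝ) ≤ 2 ^ k * η := by positivity
      nlinarith [hpow]
    calc (V.card : ℝ) = (∏ i, (if i = j then (1:ℝ) else B i)) * m := by
          rw [h1]; push_cast [apply_ite (Nat.cast : ℕ → ℝ)]; ring
      _ ≤ (2 / ε) ^ (n - 1) * N' ^ (1 - r j) * (m : ℝ) := by
          rw [h2]
          have hm' : (0:ℝ) ≤ (m:ℝ) := by positivity
          exact mul_le_mul_of_nonneg_right (h3.trans (le_of_eq h4)) hm'
      _ = (2/ε) ^ (n-1) * η * N' := h5
      _ ≤ ε * N' := mul_le_mul_of_nonneg_right h6 hN'0.le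
  have hcard : V.card < (Finset.range (K + 1)).card := by
    rw [Finset.card_range]
    have h8 : (V.card : ℝ) < (K : ℝ) + 1 := lt_of_le_of_lt hVcard hKgt
    exact_mod_cast h8
  obtain ⟨u, hu, v, hv, huv, hFuv⟩ :=
    Finset.exists_ne_map_eq_of_card_lt_of_maps_to hcard hmaps
  rw [Finset.mem_range] at hu hv
  have key : ∀ u v : ℕ, u < K + 1 → v < K + 1 → v < u → F u = F v → SimAppr r x (n * ε) := by
    clear hu hv huv hFuv u v
    intro u v hu hv hvu hFuv
    have hF1 := congrArg Prod.fst hFuv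
    have hF2 := congrArg Prod.snd hFuv
    simp only [hFdef] at hF1 hF2
    set q : ℤ := (u : ℤ) - (v : ℤ) with hqdef
    have hq0 : 0 < q := by rw [hqdef]; omega
    have hqabs : |(q : ℝ)| = (u : ℝ) - (v : ℝ) := by
      rw [abs_of_pos (by exact_mod_cast hq0)]; rw [hqdef]; push_cast; ring
    have hqle : |(q : ℝ)| ≤ ε * N' := by
      rw [hqabs]
      have h1 : (u : ℝ) ≤ (K : ℝ) := by exact_mod_cast Nat.lt_succ_iff.1 hu
      have h2 : (0 : ℝ) ≤ (v : ℝ) := by positivity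
      linarith [hKle]
    have hclose : ∀ i, i ≠ j → |(q : ℝ) * x i + ((P v i - P u i : ℤ) : ℝ)| ≤ ε / N' ^ (r i) := by
      intro i hij
      have hfl : ⌊Int.fract ((u : ℝ) * x i) * (B i : ℝ)⌋ =
          ⌊Int.fract ((v : ℝ) * x i) * (B i : ℝ)⌋ := by
        have h9 := congrFun hF1 i
        simpa [hij] using h9
      have h1 : |Int.fract ((u : ℝ) * x i) * (B i : ℝ) -
          Int.fract ((v : ℝ) * x i) * (B i : ℝ)| < 1 :=
        Int.abs_sub_lt_one_of_floor_eq_floor hfl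
      have h2 : |Int.fract ((u : ℝ) * x i) - Int.fract ((v : ℝ) * x i)| < 1 / (B i : ℝ) := by
        rw [lt_div_iff₀ (hBpos i)]
        calc |Int.fract ((u : ℝ) * x i) - Int.fract ((v : ℝ) * x i)| * (B i : ℝ)
            = |(Int.fract ((u : ℝ) * x i) - Int.fract ((v : ℝ) * x i)) * (B i : ℝ)| := by
              rw [abs_mul, abs_of_pos (hBpos i)]
          _ = |Int.fract ((u : ℝ) * x i) * (B i : ℝ) -
              Int.fract ((v : ℝ) * x i) * (B i : ℝ)| := by ring_nf
          _ < 1 := h1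
      have h3 : (q : ℝ) * x i + ((P v i - P u i : ℤ) : ℝ) =
          Int.fract ((u : ℝ) * x i) - Int.fract ((v : ℝ) * x i) := by
        simp only [hPdef, hqdef, Int.fract]
        push_cast
        ring
      rw [h3]
      exact le_trans h2.le (hBinv i)
    have hdvd : a j ∣ q * a0 + ∑ i ∈ Finset.univ.erase j, a i * (P u i - P v i) := by
      have hmod : Int.ModEq (m : ℤ) (D u) (D v) := hF2
      have h1 : (m : ℤ) ∣ D u - D v := Int.ModEq.dvd hmod.symm
      have h2 : D u - D v = q * a0 + ∑ i ∈ Finset.univ.erase j, a i * (P u i - P v i) := by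
        simp only [hDdef, hqdef]
        rw [Finset.sum_congr rfl (fun i _ => (mul_sub (a i) (P u i) (P v i))),
          Finset.sum_sub_distrib]
        ring
      rw [h2] at h1
      exact (Int.natAbs_dvd).1 h1
    set pj : ℤ := (q * a0 + ∑ i ∈ Finset.univ.erase j, a i * (P u i - P v i)) / a j
      with hpjdef
    have hpj : a j * pj = q * a0 + ∑ i ∈ Finset.univ.erase j, a i * (P u i - P v i) :=
      Int.mul_ediv_cancel' hdvd
    set p : Fin n → ℤ := fun i => if i = j then pj else P v i - P u i with hpdef
    have hiden : (a j : ℝ) * ((q : ℝ) * x j + (pj : ℝ)) =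
        (q : ℝ) * L - ∑ i ∈ Finset.univ.erase j,
          (a i : ℝ) * ((q : ℝ) * x i + ((P v i - P u i : ℤ) : ℝ)) := by
      have hcast : (a j : ℝ) * (pj : ℝ) =
          (q : ℝ) * (a0 : ℝ) + ∑ i ∈ Finset.univ.erase j,
            (a i : ℝ) * ((P u i : ℝ) - (P v i : ℝ)) := by
        have h11 := congrArg (fun z : ℤ => (z : ℝ)) hpj
        push_cast at h11
        linear_combination h11
      have hsplit : ∑ i, (a i : ℝ) * x i =
          (a j : ℝ) * x j + ∑ i ∈ Finset.univ.erase j, (a i : ℝ) * x i := by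
        exact (Finset.add_sum_erase _ _ (Finset.mem_univ j)).symm
      have hexp : ∑ i ∈ Finset.univ.erase j,
          (a i : ℝ) * ((q : ℝ) * x i + ((P v i - P u i : ℤ) : ℝ)) =
          (q : ℝ) * (∑ i ∈ Finset.univ.erase j, (a i : ℝ) * x i)
          - ∑ i ∈ Finset.univ.erase j, (a i : ℝ) * ((P u i : ℝ) - (P v i : ℝ)) := by
        rw [Finset.mul_sum, ← Finset.sum_sub_distrib]
        refine Finset.sum_congr rfl fun i _ => ?_
        push_cast
        ring
      rw [hLdef, hexp, hsplit, mul_add, hcast]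
      ring
    have hbound : |(q : ℝ) * x j + (pj : ℝ)| ≤ (n : ℝ) * ε / N' ^ (r j) := by
      have h1 : |(a j : ℝ) * ((q : ℝ) * x j + (pj : ℝ))| ≤
          |(q : ℝ)| * |L| + ∑ i ∈ Finset.univ.erase j,
            |(a i : ℝ)| * |(q : ℝ) * x i + ((P v i - P u i : ℤ) : ℝ)| := by
        rw [hiden]
        refine le_trans (abs_sub _ _) (add_le_add ?_ ?_)
        · exact (abs_mul _ _).le
        · refine le_trans (Finset.abs_sum_le_sum_abs _ _) (le_of_eq ?_)
          exact Finset.sum_congr rfl fun i _ => abs_mul _ _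
      have h2 : |(q : ℝ)| * |L| ≤ ε * η := by
        calc |(q : ℝ)| * |L| ≤ (ε * N') * (η / N') :=
              mul_le_mul hqle hLb' (abs_nonneg _) (by positivity)
          _ = ε * η := by field_simp
      have h3 : ∑ i ∈ Finset.univ.erase j,
          |(a i : ℝ)| * |(q : ℝ) * x i + ((P v i - P u i : ℤ) : ℝ)| ≤
          ∑ _i ∈ Finset.univ.erase j, η * ε := by
        refine Finset.sum_le_sum fun i hi => ?_
        have hij := Finset.ne_of_mem_erase hi
        calc |(a i : ℝ)| * |(q : ℝ) * x i + ((P v i - P u i : ℤ) : ℝ)|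
            ≤ (η * N' ^ (r i)) * (ε / N' ^ (r i)) :=
              mul_le_mul (hab' i) (hclose i hij) (abs_nonneg _) (by positivity)
          _ = η * ε := by field_simp
      have h4 : ∑ _i ∈ Finset.univ.erase j, η * ε ≤ ((n : ℝ) - 1) * (η * ε) := by
        rw [Finset.sum_const, Finset.card_erase_of_mem (Finset.mem_univ j),
          Finset.card_univ, Fintype.card_fin, nsmul_eq_mul]
        have h12 : ((n - 1 : ℕ) : ℝ) = (n : ℝ) - 1 := by
          have h13 : (1:ℕ) ≤ n := hn
          push_cast [Nat.cast_sub h13]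
          ring
        rw [h12]
      have h5 : |(a j : ℝ)| * |(q : ℝ) * x j + (pj : ℝ)| ≤ (n : ℝ) * (η * ε) := by
        rw [← abs_mul]
        calc |(a j : ℝ) * ((q : ℝ) * x j + (pj : ℝ))| ≤
            ε * η + ((n:ℝ) - 1) * (η * ε) := by linarith
          _ = (n : ℝ) * (η * ε) := by ring
      rw [hajeq] at h5
      rw [le_div_iff₀ (hNr'pos j)]
      nlinarith [h5, hη, hNr'pos j, abs_nonneg ((q : ℝ) * x j + (pj : ℝ))]
    refine ⟨N', hN'1, q, p, hq0.ne', ?_, ?_⟩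
    · refine hqle.trans ?_
      have hn' : (1:ℝ) ≤ (n : ℝ) := by exact_mod_cast hn
      nlinarith [hN'0, hε]
    · intro i
      by_cases hij : i = j
      · subst hij
        simp only [hpdef, if_pos rfl]
        exact hbound
      · simp only [hpdef, if_neg hij]
        refine le_trans (hclose i hij) ?_
        have hn' : (1:ℝ) ≤ (n : ℝ) := by exact_mod_cast hn
        gcongr
        nlinarith [hε]
  rcases Nat.lt_trichotomy u v with h | h | h
  · exact key v u hv hu h hFuv.symm
  · exact absurd h huv
  · exact key u v hu hv h hFuv


/-- Equivalence of the simultaneous and dual forms of being `r`-badly approximable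
(Lemma 1 of Beresnevich, going back to Mahler). -/
theorem stmt_5 (n : ℕ) (hn : 1 ≤ n) (r : Fin n → ℝ)
    (hr : ∀ i, 0 ≤ r i) (hsum : ∑ i, r i = 1) (x : Fin n → ℝ) :
    (∃ c > (0 : ℝ), ∀ (p : Fin n → ℤ) (q : ℤ), q ≠ 0 →
        ∃ i, c ≤ |(q : ℝ)| ^ (r i) * |(q : ℝ) * x i + (p i : ℝ)|) ↔
    (∃ c' > (0 : ℝ), ∀ N : ℝ, 1 ≤ N → ∀ (a0 : ℤ) (a : Fin n → ℤ),
        (|(a0 : ℝ) + ∑ i, (a i : ℝ) * x i| < c' * N⁻¹ ∧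
          ∀ i, |(a i : ℝ)| < N ^ (r i)) →
        a0 = 0 ∧ a = 0) := by
  have hn' : (1:ℝ) ≤ (n : ℝ) := by exact_mod_cast hn
  have hn0 : (0:ℝ) < (n : ℝ) := lt_of_lt_of_le zero_lt_one hn'
  constructor
  · -- simultaneous Bad implies dual Bad
    rintro ⟨c, hc, h1⟩
    by_contra h2
    push_neg at h2
    have hclean : ∀ c' : ℝ, 0 < c' → ∃ N : ℝ, 1 ≤ N ∧ ∃ (a0 : ℤ) (a : Fin n → ℤ),
        (|(a0 : ℝ) + ∑ i, (a i : ℝ) * x i| < c' * N⁻¹ ∧ ∀ i, |(a i : ℝ)| < N ^ (r i)) ∧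
        ¬(a0 = 0 ∧ a = 0) := by
      intro c' hc'
      obtain ⟨N, hN1, a0, a, hhyp, hcon⟩ := h2 c' hc'
      exact ⟨N, hN1, a0, a, hhyp, by tauto⟩
    -- choose parameters
    set m : ℝ := min c 1 with hmdef
    have hm0 : 0 < m := lt_min hc one_pos
    have hm1 : m ≤ 1 := min_le_right _ _
    set ε : ℝ := m / (2 * n) with hεdef
    have hε0 : 0 < ε := by positivity
    have hε1 : ε ≤ 1 := by
      rw [hεdef, div_le_one (by positivity)]
      nlinarith
    have hnε : (n : ℝ) * ε = m / 2 := by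
      rw [hεdef]; field_simp
    set η : ℝ := ε ^ n / 2 ^ n with hηdef
    have hη0 : 0 < η := by positivity
    have hη1 : η < 1 := by
      have h3 : ε ^ n ≤ 1 := pow_le_one₀ hε0.le hε1
      have h4 : (2:ℝ) ≤ 2 ^ n := by
        calc (2:ℝ) = 2 ^ 1 := (pow_one 2).symm
          _ ≤ 2 ^ n := pow_le_pow_right₀ (by norm_num) hn
      rw [hηdef]
      rw [div_lt_one (by positivity)]
      linarith
    have hpow : 2 ^ n * η ≤ ε ^ n := by
      rw [hηdef]; field_simp; norm_num
    have hdual : DualAppr r x η := lemC r x hr hsum hclean hη0 hη1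
    have hsim : SimAppr r x ((n : ℝ) * ε) := core2 hn r x hr hsum hε0 hε1 hη0 hη1 hpow hdual
    obtain ⟨Q, hQ1, q, p, hq0, hqle, hb⟩ := hsim
    obtain ⟨i, hi⟩ := h1 p q hq0
    have hQ0 : 0 < Q := lt_of_lt_of_le zero_lt_one hQ1
    have hQr : (0:ℝ) < Q ^ (r i) := Real.rpow_pos_of_pos hQ0 _
    have hnε0 : (0:ℝ) ≤ (n : ℝ) * ε := by positivity
    have hnε1 : (n : ℝ) * ε ≤ 1 := by rw [hnε]; linarith
    have h3 : |(q : ℝ)| ^ (r i) ≤ ((n : ℝ) * ε * Q) ^ (r i) :=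
      Real.rpow_le_rpow (abs_nonneg _) hqle (hr i)
    have h4 : ((n : ℝ) * ε * Q) ^ (r i) = ((n : ℝ) * ε) ^ (r i) * Q ^ (r i) :=
      Real.mul_rpow hnε0 hQ0.le
    have h5 : ((n : ℝ) * ε) ^ (r i) ≤ 1 := Real.rpow_le_one hnε0 hnε1 (hr i)
    have h6 : |(q : ℝ)| ^ (r i) * |(q : ℝ) * x i + (p i : ℝ)| ≤
        ((n : ℝ) * ε) ^ (r i) * Q ^ (r i) * (((n : ℝ) * ε) / Q ^ (r i)) := by
      refine mul_le_mul (h3.trans h4.le) (hb i) (abs_nonneg _) (by positivity)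
    have h7 : ((n : ℝ) * ε) ^ (r i) * Q ^ (r i) * (((n : ℝ) * ε) / Q ^ (r i)) =
        ((n : ℝ) * ε) ^ (r i) * ((n : ℝ) * ε) := by
      field_simp
    have h8 : ((n : ℝ) * ε) ^ (r i) * ((n : ℝ) * ε) ≤ (n : ℝ) * ε :=
      mul_le_of_le_one_left hnε0 h5
    have h9 : (n : ℝ) * ε < c := by
      rw [hnε]
      have : m ≤ c := min_le_left _ _
      linarith
    rw [h7] at h6
    linarith
  · -- dual Bad implies simultaneous Bad
    rintro ⟨c', hc', h2⟩
    by_contra h1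
    push_neg at h1
    set m : ℝ := min c' 1 with hmdef
    have hm0 : 0 < m := lt_min hc' one_pos
    have hm1 : m ≤ 1 := min_le_right _ _
    set η : ℝ := m / (2 * n) with hηdef
    have hη0 : 0 < η := by positivity
    have hη1 : η ≤ 1 := by
      rw [hηdef, div_le_one (by positivity)]
      nlinarith
    have hnη : (n : ℝ) * η = m / 2 := by
      rw [hηdef]; field_simp
    set ε : ℝ := η ^ n / 2 with hεdef
    have hε0 : 0 < ε := by positivity
    have hε1 : ε < 1 := by
      have h3 : η ^ n ≤ 1 := pow_le_one₀ hη0.le hη1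
      rw [hεdef]
      linarith
    have hpow : 2 * ε ≤ η ^ n := by
      rw [hεdef]; field_simp; norm_num
    have hsim : SimAppr r x ε := lemA r x hr hsum h1 hε0 hε1.le
    have hdual : DualAppr r x ((n : ℝ) * η) := core1 hn r x hr hsum hε0 hε1 hη0 hpow hsim
    obtain ⟨N, hN1, a0, a, hane, hLb, hab⟩ := hdual
    have hN0 : (0:ℝ) < N := lt_of_lt_of_le zero_lt_one hN1
    have hnη1 : (n : ℝ) * η < c' := by
      rw [hnη]
      have : m ≤ c' := min_le_left _ _
      linarith
    have hnηlt1 : (n : ℝ) * η < 1 := by rw [hnη]; linarith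
    have := h2 N hN1 a0 a ⟨?_, ?_⟩
    · exact hane this.2
    · calc |(a0 : ℝ) + ∑ i, (a i : ℝ) * x i| ≤ ((n : ℝ) * η) / N := hLb
        _ < c' / N := by gcongr
        _ = c' * N⁻¹ := div_eq_mul_inv _ _
    · intro i
      have h8 : (0:ℝ) < N ^ (r i) := Real.rpow_pos_of_pos hN0 _
      calc |(a i : ℝ)| ≤ ((n : ℝ) * η) * N ^ (r i) := hab i
        _ < 1 * N ^ (r i) := by
            exact mul_lt_mul_of_pos_right hnηlt1 h8
        _ = N ^ (r i) := one_mul _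
end

section
/- Let v_1,...,v_i be vectors in a normed space decomposed as v_j = a_+(j) w_+ + a_1(j) w_1 + w'(j) with w'(j) in a subspace W_2 complementary to span{w_+, w_1}. Suppose ‖w'(1)‖ ≤ ρ, and ‖∑_{j=1}^i ε_1(j) a_1(j) ⋀_{k≠j} w'(k)‖ ≤ δ where ε_1(j) are the signs arising from expanding v_1 ∧ ⋯ ∧ v_i, and |a_1(1)| > σ > 0. Then ‖⋀_{j=1}^i w'(j)‖ ≤ ρ·δ/σ. -/
/-- The key algebraic step of the key lemma: in a normed algebra, if the "wedge factors"
`w j` pairwise anticommute and square to zero, the first factor has norm at most `ρ`,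
the `w₁`-coefficient combination `∑ j (-1)^j a₁(j) ⋀_{k ≠ j} w(k)` has norm at most `δ`,
and `|a₁(0)| > σ > 0`, then `‖⋀_j w(j)‖ ≤ ρ δ / σ`. Products are ordered products of
lists, standing in for wedge products. -/
theorem stmt_16 (A : Type*) [NormedRing A] [NormedAlgebra ℝ A]
    (i : ℕ) (hi : 1 ≤ i) (w : Fin i → A)
    (hanti : ∀ k l, w k * w l = -(w l * w k))
    (hsq : ∀ k, w k * w k = 0)
    (a1 : Fin i → ℝ) (ρ δ σ : ℝ) (hρ : 0 < ρ) (hδ : 0 ≤ δ) (hσ : 0 < σ)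
    (hw1 : ‖w ⟨0, hi⟩‖ ≤ ρ)
    (hsum : ‖∑ j : Fin i, ((-1 : ℝ) ^ (j : ℕ) * a1 j) •
        (((List.finRange i).filter (fun k => k != j)).map w).prod‖ ≤ δ)
    (ha : σ < |a1 ⟨0, hi⟩|) :
    ‖((List.finRange i).map w).prod‖ ≤ ρ * δ / σ := by
  obtain ⟨n, rfl⟩ : ∃ n, i = n + 1 := ⟨i - 1, (Nat.succ_pred_eq_of_pos hi).symm⟩
  have h0 : (⟨0, hi⟩ : Fin (n + 1)) = 0 := rfl
  rw [h0] at hw1 ha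
  set S := ∑ j : Fin (n + 1), ((-1 : ℝ) ^ (j : ℕ) * a1 j) •
      (((List.finRange (n + 1)).filter (fun k => k != j)).map w).prod with hS
  set P := ((List.finRange (n + 1)).map w).prod with hP
  have hterm : ∀ j : Fin n,
      w 0 * (((-1 : ℝ) ^ ((j.succ : Fin (n + 1)) : ℕ) * a1 j.succ) •
        (((List.finRange (n + 1)).filter (fun k => k != j.succ)).map w).prod) = 0 := by
    intro j
    have hf : (List.finRange (n + 1)).filter (fun k => k != j.succ)
        = 0 :: ((List.finRange n).map Fin.succ).filter (fun k => k != j.succ) := by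
      rw [List.finRange_succ, List.filter_cons_of_pos]
      simp [(Fin.succ_ne_zero j).symm]
    rw [hf, List.map_cons, List.prod_cons, mul_smul_comm, ← mul_assoc, hsq, zero_mul,
      smul_zero]
  have hf0 : (List.finRange (n + 1)).filter (fun k => k != (0 : Fin (n + 1)))
      = (List.finRange n).map Fin.succ := by
    rw [List.finRange_succ, List.filter_cons_of_neg (by simp)]
    rw [List.filter_eq_self]
    intro a ha'
    obtain ⟨b, _, rfl⟩ := List.mem_map.mp ha'
    simp [Fin.succ_ne_zero]
  have key : w 0 * S = a1 0 • P := by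
    rw [hS, Fin.sum_univ_succ, mul_add, Finset.mul_sum]
    simp only [hterm, Finset.sum_const_zero, add_zero]
    rw [hf0, hP, List.finRange_succ, List.map_cons, List.prod_cons, mul_smul_comm]
    norm_num
  have h1 : |a1 0| * ‖P‖ = ‖w 0 * S‖ := by
    rw [key, norm_smul, Real.norm_eq_abs]
  have h2 : ‖w 0 * S‖ ≤ ρ * δ :=
    le_trans (norm_mul_le _ _) (mul_le_mul hw1 hsum (norm_nonneg _) hρ.le)
  have h3 : σ * ‖P‖ ≤ ρ * δ :=
    le_trans (mul_le_mul_of_nonneg_right ha.le (norm_nonneg _)) (h1 ▸ h2)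
  rw [le_div_iff₀ hσ]
  linarith
end
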